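/- arXiv:2306.05167 — 2 statements merged into one kernel-verified Lean document; each statement's English description precedes it below -/
import Mathlib

section
/- Let ε ≥ 0, let λ be a complex number, let u : ℕ → ℂ be an input sequence, and let δ : ℕ → ℝ satisfy |δ_k| ≤ ε for all k. Define the floating-point recursive sums by sum_0 = (1 + δ_0)·u_0 and sum_t = (1 + δ_t)·(u_t + λ·sum_{t-1}) for t ≥ 1, and let the exact state be x_t = Σ_{i=0}^{t} λ^{t-i}·u_i. Then for every t ≥ 0, the forward error satisfies |sum_t − x_t| ≤ ((1 + ε)^{t+1} − 1)·Σ_{i=0}^{t} |λ|^{t-i}·|u_i|. -/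
/-- **Forward error of the floating-point recurrent view (single channel).**
Let `ε ≥ 0`, `λ : ℂ`, `u : ℕ → ℂ`, and `δ : ℕ → ℝ` with `|δ k| ≤ ε` for all `k`.
Define `sum 0 = (1 + δ 0) * u 0` and `sum (t+1) = (1 + δ (t+1)) * (u (t+1) + λ * sum t)`.
Let the exact state be `x t = ∑ i in range (t+1), λ^(t-i) * u i`.  Then for all `t`,
`|sum t - x t| ≤ ((1 + ε)^(t+1) - 1) * ∑ i in range (t+1), |λ|^(t-i) * |u i|`. -/
theorem recurrent_view_forward_error
    (ε : ℝ) (hε : 0 ≤ ε) (lam : ℂ) (u : ℕ → ℂ) (δ : ℕ → ℝ)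
    (hδ : ∀ k, |δ k| ≤ ε)
    (sum : ℕ → ℂ)
    (hsum0 : sum 0 = (1 + (δ 0 : ℂ)) * u 0)
    (hsum : ∀ t, sum (t + 1) = (1 + (δ (t + 1) : ℂ)) * (u (t + 1) + lam * sum t)) :
    ∀ t : ℕ,
      ‖sum t - ∑ i ∈ Finset.range (t + 1), lam ^ (t - i) * u i‖ ≤
        ((1 + ε) ^ (t + 1) - 1) *
          ∑ i ∈ Finset.range (t + 1), ‖lam‖ ^ (t - i) * ‖u i‖ := by
  intro t
  induction t with
  | zero =>
    rw [hsum0]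
    simp only [zero_add, Finset.sum_range_one, Nat.sub_self, Nat.zero_sub, pow_zero,
      one_mul, pow_one]
    have h : (1 + (δ 0 : ℂ)) * u 0 - u 0 = (δ 0 : ℂ) * u 0 := by ring
    rw [h, norm_mul, Complex.norm_real, Real.norm_eq_abs]
    have h0 := hδ 0
    have h1 := norm_nonneg (u 0)
    nlinarith [abs_nonneg (δ 0)]
  | succ t ih =>
    set X := ∑ i ∈ Finset.range (t + 1), lam ^ (t - i) * u i with hX
    set S := ∑ i ∈ Finset.range (t + 1), ‖lam‖ ^ (t - i) * ‖u i‖ with hS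
    have hXs : (∑ i ∈ Finset.range (t + 1 + 1), lam ^ (t + 1 - i) * u i)
        = u (t + 1) + lam * X := by
      rw [Finset.sum_range_succ, Nat.sub_self, pow_zero, one_mul, hX, Finset.mul_sum,
        add_comm]
      congr 1
      refine Finset.sum_congr rfl fun i hi => ?_
      have hle : i ≤ t := Nat.lt_succ_iff.mp (Finset.mem_range.mp hi)
      rw [← mul_assoc, ← pow_succ', Nat.succ_sub hle]
    have hSs : (∑ i ∈ Finset.range (t + 1 + 1), ‖lam‖ ^ (t + 1 - i) * ‖u i‖)
        = ‖u (t + 1)‖ + ‖lam‖ * S := by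
      rw [Finset.sum_range_succ, Nat.sub_self, pow_zero, one_mul, hS, Finset.mul_sum,
        add_comm]
      congr 1
      refine Finset.sum_congr rfl fun i hi => ?_
      have hle : i ≤ t := Nat.lt_succ_iff.mp (Finset.mem_range.mp hi)
      rw [← mul_assoc, ← pow_succ', Nat.succ_sub hle]
    rw [hXs, hSs, hsum t]
    have key : (1 + (δ (t+1) : ℂ)) * (u (t+1) + lam * sum t) - (u (t+1) + lam * X)
        = (1 + (δ (t+1) : ℂ)) * lam * (sum t - X)
          + (δ (t+1) : ℂ) * (u (t+1) + lam * X) := by ring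
    rw [key]
    have hSnn : 0 ≤ S := by
      rw [hS]
      exact Finset.sum_nonneg fun i _ => mul_nonneg (pow_nonneg (norm_nonneg _) _)
        (norm_nonneg _)
    have hXS : ‖X‖ ≤ S := by
      rw [hX, hS]
      refine (norm_sum_le _ _).trans_eq (Finset.sum_congr rfl fun i _ => ?_)
      rw [norm_mul, norm_pow]
    have hδb : |δ (t+1)| ≤ ε := hδ (t+1)
    have h1δ : ‖1 + (δ (t+1) : ℂ)‖ ≤ 1 + ε := by
      have : (1 : ℂ) + (δ (t+1) : ℂ) = ((1 + δ (t+1) : ℝ) : ℂ) := by push_cast; ring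
      rw [this, Complex.norm_real, Real.norm_eq_abs]
      calc |1 + δ (t+1)| ≤ |(1:ℝ)| + |δ (t+1)| := abs_add_le _ _
        _ ≤ 1 + ε := by rw [abs_one]; linarith
    have hE : ‖sum t - X‖ ≤ ((1 + ε) ^ (t + 1) - 1) * S := ih
    have hEnn : 0 ≤ ‖sum t - X‖ := norm_nonneg _
    have t1 : ‖(1 + (δ (t+1) : ℂ)) * lam * (sum t - X)‖
        ≤ (1 + ε) * ‖lam‖ * ‖sum t - X‖ := by
      rw [norm_mul, norm_mul]
      gcongr
    have t2 : ‖(δ (t+1) : ℂ) * (u (t+1) + lam * X)‖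
        ≤ ε * (‖u (t+1)‖ + ‖lam‖ * S) := by
      rw [norm_mul, Complex.norm_real, Real.norm_eq_abs]
      have habs : ‖u (t+1) + lam * X‖
          ≤ ‖u (t+1)‖ + ‖lam‖ * S := by
        refine (norm_add_le _ _).trans ?_
        rw [norm_mul]
        gcongr
      exact mul_le_mul hδb habs (norm_nonneg _) hε
    have hP : (1:ℝ) ≤ (1 + ε) ^ (t + 1) := one_le_pow₀ (by linarith)
    have hlnn : 0 ≤ ‖lam‖ := norm_nonneg _
    have hunn : 0 ≤ ‖u (t+1)‖ := norm_nonneg _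
    have step : (1 + ε) * ‖lam‖ * ‖sum t - X‖
        ≤ (1 + ε) * ‖lam‖ * (((1 + ε) ^ (t + 1) - 1) * S) :=
      mul_le_mul_of_nonneg_left hE (by positivity)
    have hpow : (1 + ε) ^ (t + 1 + 1) = (1 + ε) * (1 + ε) ^ (t + 1) := by
      rw [pow_succ]; ring
    calc ‖(1 + (δ (t+1) : ℂ)) * lam * (sum t - X)
          + (δ (t+1) : ℂ) * (u (t+1) + lam * X)‖
        ≤ ‖(1 + (δ (t+1) : ℂ)) * lam * (sum t - X)‖
          + ‖(δ (t+1) : ℂ) * (u (t+1) + lam * X)‖ := norm_add_le _ _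
      _ ≤ ((1 + ε) ^ (t + 1 + 1) - 1) * (‖u (t + 1)‖ + ‖lam‖ * S) := by
          rw [hpow]
          nlinarith [mul_nonneg (mul_nonneg hε hlnn) hSnn, mul_nonneg hlnn hSnn,
            mul_nonneg (sub_nonneg.mpr hP) hunn]
end

section
/- Let ε ≥ 0, let λ_1, …, λ_N be complex numbers, let u : ℕ → ℂ be an input sequence, and for each coordinate j let δ^{(j)} : ℕ → ℝ satisfy |δ^{(j)}_k| ≤ ε for all k. For each j define the perturbed coordinate sums by sum^{(j)}_0 = (1 + δ^{(j)}_0)·u_0 and sum^{(j)}_t = (1 + δ^{(j)}_t)·(u_t + λ_j·sum^{(j)}_{t-1}), and let the exact coordinate states be x_t(j) = Σ_{i=0}^{t} λ_j^{t-i}·u_i. Then for any output coefficients c_1, …, c_N ∈ ℂ, the output error satisfies |Σ_{j=1}^{N} c_j·sum^{(j)}_t − Σ_{j=1}^{N} c_j·x_t(j)| ≤ ((1 + ε)^{t+1} − 1)·Σ_{j=1}^{N} |c_j|·Σ_{i=0}^{t} |λ_j|^{t-i}·|u_i|; in particular, when |c_j| ≤ 1 and |λ_j| ≤ 1 for all j,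 the error is at most N·((1 + ε)^{t+1} − 1)·Σ_{i=0}^{t} |u_i|. -/
open Finset

lemma ssm_coord_bound (ε : ℝ) (hε : 0 ≤ ε) (lam : ℂ) (u : ℕ → ℂ)
    (δ : ℕ → ℝ) (hδ : ∀ k, |δ k| ≤ ε) (S : ℕ → ℂ)
    (hS0 : S 0 = (1 + (δ 0 : ℂ)) * u 0)
    (hS : ∀ t, S (t + 1) = (1 + (δ (t + 1) : ℂ)) * (u (t + 1) + lam * S t)) :
    ∀ t, ‖(S t - ∑ i ∈ Finset.range (t + 1), lam ^ (t - i) * u i)‖ ≤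
      ((1 + ε) ^ (t + 1) - 1) *
        ∑ i ∈ Finset.range (t + 1), ‖lam‖ ^ (t - i) * ‖(u i)‖ := by
  intro t
  induction t with
  | zero =>
    rw [hS0, Finset.sum_range_one, Finset.sum_range_one]
    norm_num
    have h0 : (1 + (δ 0 : ℂ)) * u 0 - u 0 = (δ 0 : ℂ) * u 0 := by ring
    rw [h0, norm_mul, Complex.norm_real, Real.norm_eq_abs]
    exact mul_le_mul_of_nonneg_right (hδ 0) (norm_nonneg _)
  | succ t ih =>
    set x : ℕ → ℂ := fun t => ∑ i ∈ Finset.range (t + 1), lam ^ (t - i) * u i with hx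
    set A : ℕ → ℝ := fun t => ∑ i ∈ Finset.range (t + 1), ‖lam‖ ^ (t - i) * ‖(u i)‖ with hA
    have hxrec : x (t + 1) = u (t + 1) + lam * x t := by
      simp only [hx]
      rw [Finset.sum_range_succ, Nat.sub_self, pow_zero, one_mul, Finset.mul_sum, add_comm]
      congr 1
      refine Finset.sum_congr rfl fun i hi => ?_
      rw [Finset.mem_range] at hi
      rw [Nat.succ_sub (Nat.lt_succ_iff.mp hi), pow_succ]
      ring
    have hArec : A (t + 1) = ‖(u (t + 1))‖ + ‖lam‖ * A t := by
      simp only [hA]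
      rw [Finset.sum_range_succ, Nat.sub_self, pow_zero, one_mul, Finset.mul_sum, add_comm]
      congr 1
      refine Finset.sum_congr rfl fun i hi => ?_
      rw [Finset.mem_range] at hi
      rw [Nat.succ_sub (Nat.lt_succ_iff.mp hi), pow_succ]
      ring
    have hAnn : 0 ≤ A t := Finset.sum_nonneg fun i _ =>
      mul_nonneg (pow_nonneg (norm_nonneg _) _) (norm_nonneg _)
    have key : S (t + 1) - x (t + 1) =
        ((δ (t + 1) : ℂ)) * (u (t + 1) + lam * x t) + (1 + (δ (t + 1) : ℂ)) * lam * (S t - x t) := by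
      rw [hS t, hxrec]; ring
    have hδ1 : ‖(1 + (δ (t + 1) : ℂ))‖ ≤ 1 + ε := by
      calc ‖(1 + (δ (t + 1) : ℂ))‖ ≤ ‖(1:ℂ)‖ + ‖((δ (t + 1) : ℂ))‖ :=
            norm_add_le _ _
        _ = 1 + |δ (t + 1)| := by rw [norm_one, Complex.norm_real, Real.norm_eq_abs]
        _ ≤ 1 + ε := by linarith [hδ (t + 1)]
    have h1 : ‖((δ (t + 1) : ℂ) * (u (t + 1) + lam * x t))‖ ≤ ε * A (t + 1) := by
      rw [norm_mul, Complex.norm_real, Real.norm_eq_abs]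
      have : ‖(u (t + 1) + lam * x t)‖ ≤ A (t + 1) := by
        rw [hArec]
        calc ‖(u (t + 1) + lam * x t)‖
            ≤ ‖(u (t + 1))‖ + ‖(lam * x t)‖ := norm_add_le _ _
          _ ≤ ‖(u (t + 1))‖ + ‖lam‖ * A t := by
              rw [norm_mul]
              refine add_le_add_right (mul_le_mul_of_nonneg_left ?_ (norm_nonneg lam)) _
              -- |x t| ≤ A t
              simp only [hx, hA]
              refine (norm_sum_le _ _).trans (le_of_eq ?_)
              refine Finset.sum_congr rfl fun i _ => ?_
              rw [norm_mul, norm_pow]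
      exact mul_le_mul (hδ _) this (norm_nonneg _) hε
    have h2 : ‖((1 + (δ (t + 1) : ℂ)) * lam * (S t - x t))‖ ≤
        (1 + ε) * ((1 + ε) ^ (t + 1) - 1) * A (t + 1) := by
      rw [norm_mul, norm_mul]
      have hlA : ‖lam‖ * A t ≤ A (t + 1) := by
        rw [hArec]; linarith [norm_nonneg (u (t + 1))]
      have hpow : (0:ℝ) ≤ (1 + ε) ^ (t + 1) - 1 := by
        have : (1:ℝ) ≤ (1 + ε) ^ (t + 1) := one_le_pow₀ (by linarith)
        linarith
      calc ‖(1 + (δ (t + 1) : ℂ))‖ * ‖lam‖ * ‖(S t - x t)‖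
          ≤ (1 + ε) * ‖lam‖ * (((1 + ε) ^ (t + 1) - 1) * A t) := by
            refine mul_le_mul ?_ ih (norm_nonneg _)
              (mul_nonneg (by linarith) (norm_nonneg _))
            exact mul_le_mul_of_nonneg_right hδ1 (norm_nonneg _)
        _ = (1 + ε) * ((1 + ε) ^ (t + 1) - 1) * (‖lam‖ * A t) := by ring
        _ ≤ (1 + ε) * ((1 + ε) ^ (t + 1) - 1) * A (t + 1) := by
            refine mul_le_mul_of_nonneg_left hlA (mul_nonneg (by linarith) hpow)
    calc ‖(S (t + 1) - x (t + 1))‖ ≤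
        ‖((δ (t + 1) : ℂ) * (u (t + 1) + lam * x t))‖ +
          ‖((1 + (δ (t + 1) : ℂ)) * lam * (S t - x t))‖ := by
          rw [key]; exact norm_add_le _ _
      _ ≤ ε * A (t + 1) + (1 + ε) * ((1 + ε) ^ (t + 1) - 1) * A (t + 1) := add_le_add h1 h2
      _ = ((1 + ε) ^ (t + 1 + 1) - 1) * A (t + 1) := by ring



/-- **N-coordinate forward error bound for a diagonal state-space layer.**
For each coordinate `j`, the floating-point recursion is
`S j 0 = (1 + δ j 0) * u 0`, `S j (t+1) = (1 + δ j (t+1)) * (u (t+1) + λ j * S j t)`,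
with `|δ j k| ≤ ε`, and the exact coordinate state is
`x t j = ∑ i ≤ t, λ j ^ (t-i) * u i`.  Then for any output coefficients `c j`,
`|∑ j, c j * S j t - ∑ j, c j * x t j|
  ≤ ((1+ε)^(t+1) - 1) * ∑ j, |c j| * ∑ i ≤ t, |λ j|^(t-i) * |u i|`;
in particular, if `|c j| ≤ 1` and `|λ j| ≤ 1` for all `j`, the error is at most
`N * ((1+ε)^(t+1) - 1) * ∑ i ≤ t, |u i|`. -/
theorem diagonal_ssm_output_forward_error
    (ε : ℝ) (hε : 0 ≤ ε) (N : ℕ) (lam : Fin N → ℂ) (u : ℕ → ℂ)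
    (δ : Fin N → ℕ → ℝ) (hδ : ∀ j k, |δ j k| ≤ ε)
    (S : Fin N → ℕ → ℂ)
    (hS0 : ∀ j, S j 0 = (1 + (δ j 0 : ℂ)) * u 0)
    (hS : ∀ j t, S j (t + 1) = (1 + (δ j (t + 1) : ℂ)) * (u (t + 1) + lam j * S j t))
    (c : Fin N → ℂ) :
    ∀ t : ℕ,
      (‖(∑ j, c j * S j t -
          ∑ j, c j * ∑ i ∈ Finset.range (t + 1), lam j ^ (t - i) * u i)‖ ≤
        ((1 + ε) ^ (t + 1) - 1) *
          ∑ j, ‖(c j)‖ *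
            ∑ i ∈ Finset.range (t + 1), ‖(lam j)‖ ^ (t - i) * ‖(u i)‖) ∧
      ((∀ j, ‖(c j)‖ ≤ 1) → (∀ j, ‖(lam j)‖ ≤ 1) →
        ‖(∑ j, c j * S j t -
            ∑ j, c j * ∑ i ∈ Finset.range (t + 1), lam j ^ (t - i) * u i)‖ ≤
          N * ((1 + ε) ^ (t + 1) - 1) *
            ∑ i ∈ Finset.range (t + 1), ‖(u i)‖) := by
  intro t
  have hE : (0:ℝ) ≤ (1 + ε) ^ (t + 1) - 1 := by
    have : (1:ℝ) ≤ (1 + ε) ^ (t + 1) := one_le_pow₀ (by linarith)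
    linarith
  have hcoord : ∀ j, ‖(S j t - ∑ i ∈ Finset.range (t + 1), lam j ^ (t - i) * u i)‖ ≤
      ((1 + ε) ^ (t + 1) - 1) *
        ∑ i ∈ Finset.range (t + 1), ‖(lam j)‖ ^ (t - i) * ‖(u i)‖ :=
    fun j => ssm_coord_bound ε hε (lam j) u (δ j) (hδ j) (S j) (hS0 j) (hS j) t
  have hmain : ‖(∑ j, c j * S j t -
      ∑ j, c j * ∑ i ∈ Finset.range (t + 1), lam j ^ (t - i) * u i)‖ ≤
      ((1 + ε) ^ (t + 1) - 1) *
        ∑ j, ‖(c j)‖ *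
          ∑ i ∈ Finset.range (t + 1), ‖(lam j)‖ ^ (t - i) * ‖(u i)‖ := by
    rw [← Finset.sum_sub_distrib]
    calc ‖(∑ j, (c j * S j t -
          c j * ∑ i ∈ Finset.range (t + 1), lam j ^ (t - i) * u i))‖
        ≤ ∑ j, ‖(c j * S j t -
            c j * ∑ i ∈ Finset.range (t + 1), lam j ^ (t - i) * u i)‖ :=
          norm_sum_le _ _
      _ ≤ ∑ j, ((1 + ε) ^ (t + 1) - 1) * (‖(c j)‖ *
            ∑ i ∈ Finset.range (t + 1), ‖(lam j)‖ ^ (t - i) * ‖(u i)‖) := by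
          refine Finset.sum_le_sum fun j _ => ?_
          rw [← mul_sub, norm_mul]
          calc ‖(c j)‖ *
              ‖(S j t - ∑ i ∈ Finset.range (t + 1), lam j ^ (t - i) * u i)‖
              ≤ ‖(c j)‖ * (((1 + ε) ^ (t + 1) - 1) *
                ∑ i ∈ Finset.range (t + 1), ‖(lam j)‖ ^ (t - i) * ‖(u i)‖) :=
                mul_le_mul_of_nonneg_left (hcoord j) (norm_nonneg _)
            _ = ((1 + ε) ^ (t + 1) - 1) * (‖(c j)‖ *
                ∑ i ∈ Finset.range (t + 1), ‖(lam j)‖ ^ (t - i) * ‖(u i)‖) := by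
                ring
      _ = ((1 + ε) ^ (t + 1) - 1) *
            ∑ j, ‖(c j)‖ *
              ∑ i ∈ Finset.range (t + 1), ‖(lam j)‖ ^ (t - i) * ‖(u i)‖ := by
          rw [Finset.mul_sum]
  refine ⟨hmain, fun hc hl => ?_⟩
  refine hmain.trans ?_
  have hbound : ∑ j, ‖(c j)‖ *
      ∑ i ∈ Finset.range (t + 1), ‖(lam j)‖ ^ (t - i) * ‖(u i)‖ ≤
      (N : ℝ) * ∑ i ∈ Finset.range (t + 1), ‖(u i)‖ := by
    calc ∑ j, ‖(c j)‖ *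
        ∑ i ∈ Finset.range (t + 1), ‖(lam j)‖ ^ (t - i) * ‖(u i)‖
        ≤ ∑ _j : Fin N, ∑ i ∈ Finset.range (t + 1), ‖(u i)‖ := by
          refine Finset.sum_le_sum fun j _ => ?_
          have h1 : ∑ i ∈ Finset.range (t + 1), ‖(lam j)‖ ^ (t - i) * ‖(u i)‖
              ≤ ∑ i ∈ Finset.range (t + 1), ‖(u i)‖ := by
            refine Finset.sum_le_sum fun i _ => ?_
            have : ‖(lam j)‖ ^ (t - i) ≤ 1 :=
              pow_le_one₀ (norm_nonneg _) (hl j)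
            calc ‖(lam j)‖ ^ (t - i) * ‖(u i)‖
                ≤ 1 * ‖(u i)‖ :=
                  mul_le_mul_of_nonneg_right this (norm_nonneg _)
              _ = ‖(u i)‖ := one_mul _
          calc ‖(c j)‖ *
              ∑ i ∈ Finset.range (t + 1), ‖(lam j)‖ ^ (t - i) * ‖(u i)‖
              ≤ 1 * ∑ i ∈ Finset.range (t + 1), ‖(u i)‖ := by
                refine mul_le_mul (hc j) h1 ?_ zero_le_one
                exact Finset.sum_nonneg fun i _ =>
                  mul_nonneg (pow_nonneg (norm_nonneg _) _) (norm_nonneg _)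
            _ = ∑ i ∈ Finset.range (t + 1), ‖(u i)‖ := one_mul _
      _ = (N : ℝ) * ∑ i ∈ Finset.range (t + 1), ‖(u i)‖ := by
          rw [Finset.sum_const, Finset.card_univ, Fintype.card_fin, nsmul_eq_mul]
  calc ((1 + ε) ^ (t + 1) - 1) * ∑ j, ‖(c j)‖ *
        ∑ i ∈ Finset.range (t + 1), ‖(lam j)‖ ^ (t - i) * ‖(u i)‖
      ≤ ((1 + ε) ^ (t + 1) - 1) *
        ((N : ℝ) * ∑ i ∈ Finset.range (t + 1), ‖(u i)‖) :=
        mul_le_mul_of_nonneg_left hbound hE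
    _ = (N : ℝ) * ((1 + ε) ^ (t + 1) - 1) *
        ∑ i ∈ Finset.range (t + 1), ‖(u i)‖ := by ring
end
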